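/- arXiv:1712.06363 — 2 statements merged into one kernel-verified Lean document; each statement's English description precedes it below -/
import Mathlib

section
/- Let X be a graph as in the context and fix a vertex x₀. Then N₃(x₀) = c₃(x₀) − (deg(x₀)−2)·c₁(x₀) + (Δ_X c₁)(x₀). -/
/-- A graph in the sense of Serre: an edge set with origin/terminus maps and a
fixed-point-free involution `bar` satisfying `o e = t (bar e)`.
Loops and multiple edges are allowed. -/
structure SerreGraph where
  V : Type
  E : Type
  o : E → V
  t : E → V
  bar : E → E
  bar_ne : ∀ e, bar e ≠ e
  bar_bar : ∀ e, bar (bar e) = e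
  o_bar : ∀ e, o e = t (bar e)

namespace SerreGraph

variable (X : SerreGraph)

/-- The set of edges emanating from `x`. -/
def edgesAt (x : X.V) : Set X.E := {e | X.o e = x}

/-- The degree of a vertex. -/
noncomputable def deg (x : X.V) : ℕ := Nat.card (X.edgesAt x)

/-- A sequence of `m` edges is a path when consecutive edges are composable. -/
def IsPath {m : ℕ} (p : Fin m → X.E) : Prop :=
  ∀ (i : ℕ) (h : i + 1 < m), X.t (p ⟨i, by omega⟩) = X.o (p ⟨i + 1, h⟩)

/-- No backtracking: no edge is followed by its reversal. -/
def NoBacktrack {m : ℕ} (p : Fin m → X.E) : Prop :=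
  ∀ (i : ℕ) (h : i + 1 < m), p ⟨i + 1, h⟩ ≠ X.bar (p ⟨i, by omega⟩)

/-- A geodesic loop at `x`: a closed path starting and ending at `x` with no
backtracking. -/
def IsGeodesicLoopAt {m : ℕ} (x : X.V) (p : Fin m → X.E) : Prop :=
  X.IsPath p ∧ X.NoBacktrack p ∧
    ∀ (h : 0 < m), X.o (p ⟨0, h⟩) = x ∧ X.t (p ⟨m - 1, by omega⟩) = x

/-- A path has a tail when its last edge is the reversal of its first edge. -/
def HasTail {m : ℕ} (p : Fin m → X.E) : Prop :=
  ∃ (h : 0 < m), p ⟨m - 1, by omega⟩ = X.bar (p ⟨0, h⟩)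

/-- `c m x` is the number of geodesic loops of length `m` starting at `x`. -/
noncomputable def c (m : ℕ) (x : X.V) : ℕ :=
  Nat.card {p : Fin m → X.E // X.IsGeodesicLoopAt x p}

/-- `N m x` is the number of closed geodesics of length `m` starting at `x`,
i.e. geodesic loops with no tail. -/
noncomputable def N (m : ℕ) (x : X.V) : ℕ :=
  Nat.card {p : Fin m → X.E // X.IsGeodesicLoopAt x p ∧ ¬ X.HasTail p}

/-- The formal combinatorial Laplacian applied to a function on vertices:
`(Δ f)(x) = deg(x)·f(x) − Σ_{e ∈ E_x} f(t(e))`. -/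
noncomputable def lap (f : X.V → ℤ) (x : X.V) : ℤ :=
  (X.deg x : ℤ) * f x - ∑ᶠ e ∈ X.edgesAt x, f (X.t e)

/-- Connectedness: any two vertices are joined by a path. -/
def Connected : Prop :=
  ∀ x y : X.V, x = y ∨ ∃ (m : ℕ) (p : Fin m → X.E) (h : 0 < m),
    X.IsPath p ∧ X.o (p ⟨0, h⟩) = x ∧ X.t (p ⟨m - 1, by omega⟩) = y

end SerreGraph

namespace SerreGraph

variable (X : SerreGraph)

-- auxiliary lemmas
lemma t_bar (e : X.E) : X.t (X.bar e) = X.o e := (X.o_bar e).symm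

lemma o_bar' (e : X.E) : X.o (X.bar e) = X.t e := by
  have := X.o_bar (X.bar e); rwa [X.bar_bar] at this

lemma bar_inj : Function.Injective X.bar := by
  intro a b h
  have := congrArg X.bar h
  rwa [X.bar_bar, X.bar_bar] at this

lemma gl1_iff (x : X.V) (p : Fin 1 → X.E) :
    X.IsGeodesicLoopAt x p ↔ X.o (p ⟨0, one_pos⟩) = x ∧ X.t (p ⟨0, one_pos⟩) = x := by
  constructor
  · rintro ⟨_, _, h⟩
    exact h one_pos
  · intro h
    exact ⟨fun i hi => by omega, fun i hi => by omega, fun _ => h⟩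

lemma gl3_iff (x : X.V) (p : Fin 3 → X.E) :
    X.IsGeodesicLoopAt x p ↔
      (X.o (p ⟨0, by omega⟩) = x ∧
       X.o (p ⟨1, by omega⟩) = X.t (p ⟨0, by omega⟩) ∧
       X.o (p ⟨2, by omega⟩) = X.t (p ⟨1, by omega⟩) ∧
       X.t (p ⟨2, by omega⟩) = x ∧
       p ⟨1, by omega⟩ ≠ X.bar (p ⟨0, by omega⟩) ∧
       p ⟨2, by omega⟩ ≠ X.bar (p ⟨1, by omega⟩)) := by
  constructor
  · rintro ⟨hp, hb, hc⟩
    exact ⟨(hc (by omega)).1, (hp 0 (by omega)).symm, (hp 1 (by omega)).symm,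
      (hc (by omega)).2, hb 0 (by omega), hb 1 (by omega)⟩
  · rintro ⟨h1, h2, h3, h4, h5, h6⟩
    refine ⟨?_, ?_, fun _ => ⟨h1, h4⟩⟩
    · intro i hi
      have hi2 : i < 2 := by omega
      interval_cases i
      · exact h2.symm
      · exact h3.symm
    · intro i hi
      have hi2 : i < 2 := by omega
      interval_cases i
      · exact h5
      · exact h6

lemma tail3_iff (p : Fin 3 → X.E) :
    X.HasTail p ↔ p ⟨2, by omega⟩ = X.bar (p ⟨0, by omega⟩) := by
  constructor
  · rintro ⟨_, h⟩; exact h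
  · intro h; exact ⟨by omega, h⟩


end SerreGraph

/-- `N₃(x₀) = c₃(x₀) − (deg(x₀)−2)·c₁(x₀) + (Δ_X c₁)(x₀)`. -/
theorem N_three_formula (X : SerreGraph) [Countable X.V]
    (hconn : X.Connected)
    (hfin : ∀ x : X.V, (X.edgesAt x).Finite)
    (hbd : ∃ M : ℕ, ∀ x : X.V, X.deg x ≤ M)
    (hdeg1 : ∀ x : X.V, X.deg x ≠ 1)
    (x₀ : X.V) :
    (X.N 3 x₀ : ℤ) =
      (X.c 3 x₀ : ℤ) - ((X.deg x₀ : ℤ) - 2) * X.c 1 x₀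
        + X.lap (fun x => (X.c 1 x : ℤ)) x₀ := by
  classical
  set F : X.V → Finset X.E := fun x => (hfin x).toFinset with hF
  have hmemF : ∀ (x : X.V) (e : X.E), e ∈ F x ↔ X.o e = x := by
    intro x e
    simp [hF, SerreGraph.edgesAt]
  set L : X.V → Finset X.E := fun x => (F x).filter (fun e => X.t e = x) with hL
  have hmemL : ∀ (x : X.V) (e : X.E), e ∈ L x ↔ X.o e = x ∧ X.t e = x := by
    intro x e
    simp [hL, hmemF, Finset.mem_filter]
  -- c 1 = card of L
  have hc1 : ∀ x : X.V, X.c 1 x = (L x).card := by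
    intro x
    have : {p : Fin 1 → X.E // X.IsGeodesicLoopAt x p} ≃ {e : X.E // e ∈ L x} :=
      { toFun := fun p => ⟨p.1 ⟨0, one_pos⟩, by
          rw [hmemL]; exact (X.gl1_iff x p.1).1 p.2⟩
        invFun := fun e => ⟨fun _ => e.1, (X.gl1_iff x _).2 ((hmemL x e.1).1 e.2)⟩
        left_inv := fun p => by
          ext i
          exact congrArg p.1 (Subsingleton.elim _ _)
        right_inv := fun e => rfl }
    rw [SerreGraph.c, Nat.card_congr this, Nat.card_eq_fintype_card, Fintype.card_coe]
  -- deg = card of F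
  have hdegF : X.deg x₀ = (F x₀).card := by
    rw [SerreGraph.deg, Nat.card_coe_set_eq, ← (hfin x₀).coe_toFinset,
      Set.ncard_coe_finset]
  -- the finset of geodesic loops of length 3 (as triples)
  set A : Finset (X.E × X.E × X.E) :=
    (((F x₀).biUnion fun e₁ =>
      (F (X.t e₁)).biUnion fun e₂ => (F (X.t e₂)).image fun e₃ => (e₁, e₂, e₃)).filter
      (fun q => X.t q.2.2 = x₀ ∧ q.2.1 ≠ X.bar q.1 ∧ q.2.2 ≠ X.bar q.2.1)) with hA
  have hmemA : ∀ q : X.E × X.E × X.E, q ∈ A ↔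
      (X.o q.1 = x₀ ∧ X.o q.2.1 = X.t q.1 ∧ X.o q.2.2 = X.t q.2.1 ∧
       X.t q.2.2 = x₀ ∧ q.2.1 ≠ X.bar q.1 ∧ q.2.2 ≠ X.bar q.2.1) := by
    rintro ⟨a, b, c⟩
    simp only [hA, Finset.mem_filter, Finset.mem_biUnion, Finset.mem_image, hmemF,
      Prod.mk.injEq]
    constructor
    · rintro ⟨⟨e₁, h1, e₂, h2, e₃, h3, rfl, rfl, rfl⟩, h4⟩
      exact ⟨h1, h2, h3, h4⟩
    · rintro ⟨h1, h2, h3, h4⟩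
      exact ⟨⟨a, h1, b, h2, c, h3, rfl, rfl, rfl⟩, h4⟩
  -- c 3 = A.card
  have hc3 : X.c 3 x₀ = A.card := by
    have : {p : Fin 3 → X.E // X.IsGeodesicLoopAt x₀ p} ≃ {q : X.E × X.E × X.E // q ∈ A} :=
      { toFun := fun p => ⟨(p.1 ⟨0, by omega⟩, p.1 ⟨1, by omega⟩, p.1 ⟨2, by omega⟩), by
          rw [hmemA]
          exact (X.gl3_iff x₀ p.1).1 p.2⟩
        invFun := fun q => ⟨![q.1.1, q.1.2.1, q.1.2.2], (X.gl3_iff x₀ _).2 (by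
          have := (hmemA q.1).1 q.2
          simpa using this)⟩
        left_inv := fun p => by
          ext i
          fin_cases i <;> rfl
        right_inv := fun q => Subtype.ext (by obtain ⟨⟨a, b, c⟩, h⟩ := q; rfl) }
    rw [SerreGraph.c, Nat.card_congr this, Nat.card_eq_fintype_card, Fintype.card_coe]
  -- N 3 = (A.filter no-tail).card
  set Nf : Finset (X.E × X.E × X.E) := A.filter (fun q => ¬ q.2.2 = X.bar q.1) with hNf
  set Bf : Finset (X.E × X.E × X.E) := A.filter (fun q => q.2.2 = X.bar q.1) with hBf
  have hmemNf : ∀ q : X.E × X.E × X.E, q ∈ Nf ↔ q ∈ A ∧ ¬ q.2.2 = X.bar q.1 := by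
    intro q; rw [hNf]; exact Finset.mem_filter
  have hN3 : X.N 3 x₀ = Nf.card := by
    have : {p : Fin 3 → X.E // X.IsGeodesicLoopAt x₀ p ∧ ¬ X.HasTail p} ≃
        {q : X.E × X.E × X.E // q ∈ Nf} :=
      { toFun := fun p => ⟨(p.1 ⟨0, by omega⟩, p.1 ⟨1, by omega⟩, p.1 ⟨2, by omega⟩), by
          rw [hmemNf, hmemA]
          refine ⟨(X.gl3_iff x₀ p.1).1 p.2.1, ?_⟩
          have h := p.2.2
          rw [X.tail3_iff] at h
          exact h⟩
        invFun := fun q => ⟨![q.1.1, q.1.2.1, q.1.2.2], by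
          have hq := (hmemNf q.1).1 q.2
          refine ⟨(X.gl3_iff x₀ _).2 (by have := (hmemA q.1).1 hq.1; simpa using this), ?_⟩
          rw [X.tail3_iff]
          simpa using hq.2⟩
        left_inv := fun p => by
          ext i
          fin_cases i <;> rfl
        right_inv := fun q => Subtype.ext (by obtain ⟨⟨a, b, c⟩, h⟩ := q; rfl) }
    rw [SerreGraph.N, Nat.card_congr this, Nat.card_eq_fintype_card, Fintype.card_coe]
  -- split A into tailed and untailed
  have hsplit : Bf.card + Nf.card = A.card := by
    rw [hNf, hBf]
    exact Finset.card_filter_add_card_filter_not _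
  -- Bf as a biUnion over first edges
  have hBfeq : Bf = (F x₀).biUnion (fun e₁ =>
      ((L (X.t e₁)).filter (fun e₂ => ¬(e₂ = X.bar e₁ ∨ e₂ = e₁))).image
        (fun e₂ => (e₁, e₂, X.bar e₁))) := by
    ext ⟨a, b, c⟩
    constructor
    · intro hq
      obtain ⟨hqA, g7⟩ := Finset.mem_filter.1 hq
      obtain ⟨g1, g2, g3, g4, g5, g6⟩ := (hmemA _).1 hqA
      simp only at g1 g2 g3 g4 g5 g6 g7
      apply Finset.mem_biUnion.2
      refine ⟨a, (hmemF _ _).2 g1, Finset.mem_image.2 ⟨b, Finset.mem_filter.2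
        ⟨(hmemL _ _).2 ⟨g2, ?_⟩, ?_⟩, ?_⟩⟩
      · rw [g7, X.o_bar'] at g3
        exact g3.symm
      · rintro (rfl | rfl)
        · exact g5 rfl
        · exact g6 (by rw [g7])
      · rw [← g7]
    · intro hq
      obtain ⟨e₁, he₁, hm⟩ := Finset.mem_biUnion.1 hq
      obtain ⟨e₂, he₂, heq⟩ := Finset.mem_image.1 hm
      rw [Prod.mk.injEq, Prod.mk.injEq] at heq
      obtain ⟨rfl, rfl, rfl⟩ := heq
      obtain ⟨hl, hn⟩ := Finset.mem_filter.1 he₂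
      obtain ⟨hl1, hl2⟩ := (hmemL _ _).1 hl
      have ho : X.o e₁ = x₀ := (hmemF _ _).1 he₁
      refine Finset.mem_filter.2 ⟨(hmemA _).2 ⟨ho, hl1, ?_, ?_, ?_, ?_⟩, rfl⟩
      · rw [X.o_bar', ← hl2]
      · rw [X.t_bar, ho]
      · intro h; exact hn (Or.inl h)
      · intro h
        have : e₁ = e₂ := X.bar_inj (by rw [← h])
        exact hn (Or.inr this.symm)
  -- per-first-edge count
  have hterm : ∀ e₁ ∈ F x₀,
      ((((L (X.t e₁)).filter (fun e₂ => ¬(e₂ = X.bar e₁ ∨ e₂ = e₁))).card : ℤ))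
        = (X.c 1 (X.t e₁) : ℤ) - (if X.t e₁ = x₀ then 2 else 0) := by
    intro e₁ he₁
    have ho : X.o e₁ = x₀ := (hmemF _ _).1 he₁
    have hsp := Finset.card_filter_add_card_filter_not
      (s := L (X.t e₁)) (p := fun e₂ => (e₂ = X.bar e₁ ∨ e₂ = e₁))
    have hpos : ((L (X.t e₁)).filter (fun e₂ => e₂ = X.bar e₁ ∨ e₂ = e₁)).card
        = if X.t e₁ = x₀ then 2 else 0 := by
      by_cases hx : X.t e₁ = x₀
      · rw [if_pos hx]
        have hb : X.bar e₁ ∈ L (X.t e₁) :=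
          (hmemL _ _).2 ⟨X.o_bar' e₁, by rw [X.t_bar, ho, hx]⟩
        have he : e₁ ∈ L (X.t e₁) := (hmemL _ _).2 ⟨by rw [ho, hx], rfl⟩
        have hset : (L (X.t e₁)).filter (fun e₂ => e₂ = X.bar e₁ ∨ e₂ = e₁)
            = {X.bar e₁, e₁} := by
          ext e
          simp only [Finset.mem_filter, Finset.mem_insert, Finset.mem_singleton]
          constructor
          · rintro ⟨_, h⟩; exact h
          · rintro (rfl | rfl)
            exacts [⟨hb, Or.inl rfl⟩, ⟨he, Or.inr rfl⟩]
        rw [hset, Finset.card_insert_of_notMem (by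
          simp only [Finset.mem_singleton]; exact X.bar_ne e₁), Finset.card_singleton]
      · rw [if_neg hx, Finset.card_eq_zero]
        ext e
        simp only [Finset.mem_filter, Finset.notMem_empty, iff_false, not_and]
        intro hL'
        obtain ⟨h1, h2⟩ := (hmemL _ _).1 hL'
        rintro (rfl | rfl)
        · exact hx (by rw [← h2, X.t_bar, ho])
        · exact hx (by rw [← h1, ho])
    have hcast : (((L (X.t e₁)).filter (fun e₂ => ¬(e₂ = X.bar e₁ ∨ e₂ = e₁))).card : ℤ)
        = ((L (X.t e₁)).card : ℤ)
          - (((L (X.t e₁)).filter (fun e₂ => e₂ = X.bar e₁ ∨ e₂ = e₁)).card : ℤ) := by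
      have := hsp
      push_cast [← this]
      ring
    rw [hcast, hpos, hc1]
    split_ifs <;> push_cast <;> ring
  -- card of Bf
  have hBcard : (Bf.card : ℤ)
      = (∑ e ∈ F x₀, (X.c 1 (X.t e) : ℤ)) - 2 * (X.c 1 x₀ : ℤ) := by
    rw [hBfeq, Finset.card_biUnion]
    · have h1 : ((∑ e₁ ∈ F x₀,
          (((L (X.t e₁)).filter (fun e₂ => ¬(e₂ = X.bar e₁ ∨ e₂ = e₁))).image
            (fun e₂ => (e₁, e₂, X.bar e₁))).card : ℕ) : ℤ)
          = ∑ e₁ ∈ F x₀, ((X.c 1 (X.t e₁) : ℤ) - (if X.t e₁ = x₀ then 2 else 0)) := by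
        push_cast
        refine Finset.sum_congr rfl fun e₁ he₁ => ?_
        rw [Finset.card_image_of_injective _ (fun x y h => by
          have := congrArg (fun q => q.2.1) h
          exact this)]
        exact hterm e₁ he₁
      rw [h1, Finset.sum_sub_distrib]
      congr 1
      have h2 : (∑ e₁ ∈ F x₀, (if X.t e₁ = x₀ then (2 : ℤ) else 0))
          = ∑ e₁ ∈ (F x₀).filter (fun e => X.t e = x₀), (2 : ℤ) := by
        rw [Finset.sum_filter]
      rw [h2, Finset.sum_const, hc1]
      have : (F x₀).filter (fun e => X.t e = x₀) = L x₀ := rfl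
      rw [this, nsmul_eq_mul, mul_comm]
    · intro x hx y hy hxy
      rw [Function.onFun, Finset.disjoint_left]
      intro q hqx hqy
      obtain ⟨_, _, rfl⟩ := Finset.mem_image.1 hqx
      obtain ⟨_, _, h⟩ := Finset.mem_image.1 hqy
      exact hxy (congrArg (fun r => r.1) h).symm
  -- lap
  have hlap : X.lap (fun x => (X.c 1 x : ℤ)) x₀
      = (X.deg x₀ : ℤ) * (X.c 1 x₀ : ℤ) - ∑ e ∈ F x₀, (X.c 1 (X.t e) : ℤ) := by
    rw [SerreGraph.lap]
    congr 1
    rw [← (hfin x₀).coe_toFinset, finsum_mem_coe_finset]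
  -- conclude
  have hA3 : (X.c 3 x₀ : ℤ) = (Bf.card : ℤ) + (Nf.card : ℤ) := by
    rw [hc3]
    exact_mod_cast hsplit.symm
  rw [hN3, hlap, hA3, hBcard]
  ring
end

section
/- Let X be a graph as in the context and fix a vertex x₀. Then N₄(x₀) = c₄(x₀) − (deg(x₀)−2)·c₂(x₀) + (Δ_X c₂)(x₀). -/
/-! ### Auxiliary material for `N_four_formula` -/

namespace N4Aux

open SerreGraph

variable (X : SerreGraph)

lemma bar_inj : Function.Injective X.bar := by
  intro a b h
  rw [← X.bar_bar a, h, X.bar_bar]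

lemma t_bar (e : X.E) : X.t (X.bar e) = X.o e := (X.o_bar e).symm

lemma o_bar' (e : X.E) : X.o (X.bar e) = X.t e := by
  rw [X.o_bar (X.bar e), X.bar_bar]

/-- Geodesic loops of length 2 at `x`, as pairs of edges. -/
def L2S (x : X.V) : Set (X.E × X.E) :=
  {q | X.o q.1 = x ∧ X.t q.1 = X.o q.2 ∧ X.t q.2 = x ∧ q.2 ≠ X.bar q.1}

/-- Geodesic loops of length 4 at `x`, as quadruples of edges. -/
def L4S (x : X.V) : Set (X.E × X.E × X.E × X.E) :=
  {q | X.o q.1 = x ∧ X.t q.1 = X.o q.2.1 ∧ X.t q.2.1 = X.o q.2.2.1 ∧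
    X.t q.2.2.1 = X.o q.2.2.2 ∧ X.t q.2.2.2 = x ∧
    q.2.1 ≠ X.bar q.1 ∧ q.2.2.1 ≠ X.bar q.2.1 ∧ q.2.2.2 ≠ X.bar q.2.2.1}

/-- The fibre over `e` of tailed 4-loops: 2-loops at `t e` avoiding `bar e` and `e`. -/
def Ge (x₀ : X.V) (e : X.E) : Type :=
  {fg : X.E × X.E // fg ∈ L2S X (X.t e) ∧ fg.1 ≠ X.bar e ∧ fg.2 ≠ e}

/-- Parallel edges to `e` based at `x₀`. -/
def Ke (x₀ : X.V) (e : X.E) : Type :=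
  {g : X.E // X.o g = x₀ ∧ X.t g = X.t e ∧ g ≠ e}

lemma loop2_iff (x : X.V) (p : Fin 2 → X.E) :
    X.IsGeodesicLoopAt x p ↔
      (X.o (p 0) = x ∧ X.t (p 0) = X.o (p 1) ∧ X.t (p 1) = x ∧ p 1 ≠ X.bar (p 0)) := by
  unfold SerreGraph.IsGeodesicLoopAt SerreGraph.IsPath SerreGraph.NoBacktrack
  constructor
  · rintro ⟨hp, hb, hc⟩
    obtain ⟨h1, h2⟩ := hc two_pos
    exact ⟨h1, hp 0 (by norm_num), h2, hb 0 (by norm_num)⟩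
  · rintro ⟨h1, h2, h3, h4⟩
    refine ⟨fun i h => ?_, fun i h => ?_, fun _ => ⟨h1, h3⟩⟩
    · have : i = 0 := by omega
      subst this
      exact h2
    · have : i = 0 := by omega
      subst this
      exact h4

lemma loop4_iff (x : X.V) (p : Fin 4 → X.E) :
    X.IsGeodesicLoopAt x p ↔
      (X.o (p 0) = x ∧ X.t (p 0) = X.o (p 1) ∧ X.t (p 1) = X.o (p 2) ∧
        X.t (p 2) = X.o (p 3) ∧ X.t (p 3) = x ∧
        p 1 ≠ X.bar (p 0) ∧ p 2 ≠ X.bar (p 1) ∧ p 3 ≠ X.bar (p 2)) := by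
  unfold SerreGraph.IsGeodesicLoopAt SerreGraph.IsPath SerreGraph.NoBacktrack
  constructor
  · rintro ⟨hp, hb, hc⟩
    obtain ⟨h1, h2⟩ := hc four_pos
    exact ⟨h1, hp 0 (by norm_num), hp 1 (by norm_num), hp 2 (by norm_num), h2,
      hb 0 (by norm_num), hb 1 (by norm_num), hb 2 (by norm_num)⟩
  · rintro ⟨h1, h2, h3, h4, h5, h6, h7, h8⟩
    refine ⟨fun i h => ?_, fun i h => ?_, fun _ => ⟨h1, h5⟩⟩
    · have : i = 0 ∨ i = 1 ∨ i = 2 := by omega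
      rcases this with rfl | rfl | rfl
      · exact h2
      · exact h3
      · exact h4
    · have : i = 0 ∨ i = 1 ∨ i = 2 := by omega
      rcases this with rfl | rfl | rfl
      · exact h6
      · exact h7
      · exact h8

lemma tail4_iff (p : Fin 4 → X.E) : X.HasTail p ↔ p 3 = X.bar (p 0) := by
  unfold SerreGraph.HasTail
  exact ⟨fun ⟨_, hp⟩ => hp, fun h => ⟨four_pos, h⟩⟩

lemma c2_card (x : X.V) : X.c 2 x = Nat.card (L2S X x) := by
  unfold SerreGraph.c
  apply Nat.card_congr
  refine ⟨fun p => ⟨(p.1 0, p.1 1), (loop2_iff X x p.1).mp p.2⟩,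
    fun q => ⟨![q.1.1, q.1.2], (loop2_iff X x _).mpr (by
      obtain ⟨h1, h2, h3, h4⟩ := q.2
      exact ⟨h1, h2, h3, h4⟩)⟩, ?_, ?_⟩
  · intro p
    apply Subtype.ext
    funext i
    fin_cases i <;> rfl
  · intro q
    apply Subtype.ext
    rfl

lemma c4_card (x : X.V) : X.c 4 x = Nat.card (L4S X x) := by
  unfold SerreGraph.c
  apply Nat.card_congr
  refine ⟨fun p => ⟨(p.1 0, p.1 1, p.1 2, p.1 3), (loop4_iff X x p.1).mp p.2⟩,
    fun q => ⟨![q.1.1, q.1.2.1, q.1.2.2.1, q.1.2.2.2], (loop4_iff X x _).mpr (by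
      obtain ⟨h1, h2, h3, h4, h5, h6, h7, h8⟩ := q.2
      exact ⟨h1, h2, h3, h4, h5, h6, h7, h8⟩)⟩, ?_, ?_⟩
  · intro p
    apply Subtype.ext
    funext i
    fin_cases i <;> rfl
  · intro q
    apply Subtype.ext
    rfl

lemma N4_card (x : X.V) :
    X.N 4 x =
      Nat.card {q : X.E × X.E × X.E × X.E // q ∈ L4S X x ∧ ¬ q.2.2.2 = X.bar q.1} := by
  unfold SerreGraph.N
  apply Nat.card_congr
  refine ⟨fun p => ⟨(p.1 0, p.1 1, p.1 2, p.1 3),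
      (loop4_iff X x p.1).mp p.2.1, fun h => p.2.2 ((tail4_iff X p.1).mpr h)⟩,
    fun q => ⟨![q.1.1, q.1.2.1, q.1.2.2.1, q.1.2.2.2], ?_, ?_⟩, ?_, ?_⟩
  · apply (loop4_iff X x _).mpr
    obtain ⟨⟨h1, h2, h3, h4, h5, h6, h7, h8⟩, h9⟩ := q.2
    exact ⟨h1, h2, h3, h4, h5, h6, h7, h8⟩
  · intro h
    exact q.2.2 ((tail4_iff X _).mp h)
  · intro p
    apply Subtype.ext
    funext i
    fin_cases i <;> rfl
  · intro q
    apply Subtype.ext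
    rfl

lemma L2S_finite (hfin : ∀ x : X.V, (X.edgesAt x).Finite) (x : X.V) :
    (L2S X x).Finite := by
  apply Set.Finite.subset ((hfin x).prod ((hfin x).biUnion (fun e _ => hfin (X.t e))))
  rintro ⟨f, g⟩ ⟨h1, h2, h3, h4⟩
  exact ⟨h1, Set.mem_biUnion h1 h2.symm⟩

lemma L4S_finite (hfin : ∀ x : X.V, (X.edgesAt x).Finite) (x : X.V) :
    (L4S X x).Finite := by
  have hB1 : (⋃ e ∈ X.edgesAt x, X.edgesAt (X.t e)).Finite :=
    (hfin x).biUnion (fun e _ => hfin (X.t e))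
  have hB2 : (⋃ e ∈ (⋃ e ∈ X.edgesAt x, X.edgesAt (X.t e)), X.edgesAt (X.t e)).Finite :=
    hB1.biUnion (fun e _ => hfin (X.t e))
  have hB3 : (⋃ e ∈ (⋃ e ∈ (⋃ e ∈ X.edgesAt x, X.edgesAt (X.t e)), X.edgesAt (X.t e)),
      X.edgesAt (X.t e)).Finite := hB2.biUnion (fun e _ => hfin (X.t e))
  apply Set.Finite.subset ((hfin x).prod (hB1.prod (hB2.prod hB3)))
  rintro ⟨a, b, cc, d⟩ ⟨h1, h2, h3, h4, h5, h6, h7, h8⟩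
  have hb : b ∈ ⋃ e ∈ X.edgesAt x, X.edgesAt (X.t e) := Set.mem_biUnion h1 h2.symm
  have hc : cc ∈ ⋃ e ∈ (⋃ e ∈ X.edgesAt x, X.edgesAt (X.t e)), X.edgesAt (X.t e) :=
    Set.mem_biUnion hb h3.symm
  exact ⟨h1, hb, hc, Set.mem_biUnion hc h4.symm⟩

/-- Splitting the cardinality of a finite set by a predicate. -/
lemma nat_card_split {α : Type*} (S : Set α) (hS : S.Finite) (P : α → Prop) :
    Nat.card S = Nat.card {a // a ∈ S ∧ P a} + Nat.card {a // a ∈ S ∧ ¬ P a} := by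
  classical
  have h1 : Finite {a // a ∈ S ∧ P a} :=
    (hS.subset (fun a (h : a ∈ S ∧ P a) => h.1)).to_subtype
  have h2 : Finite {a // a ∈ S ∧ ¬ P a} :=
    (hS.subset (fun a (h : a ∈ S ∧ ¬ P a) => h.1)).to_subtype
  rw [← Nat.card_sum]
  apply Nat.card_congr
  exact ((Equiv.sumCongr (Equiv.subtypeSubtypeEquivSubtypeInter _ _)
    (Equiv.subtypeSubtypeEquivSubtypeInter _ _)).symm.trans
      (Equiv.sumCompl (fun a : S => P a.1))).symm

lemma nat_card_sigma {ι : Type*} [Fintype ι] (f : ι → Type*) [∀ i, Finite (f i)] :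
    Nat.card (Σ i, f i) = ∑ i, Nat.card (f i) := by
  classical
  letI : ∀ i, Fintype (f i) := fun i => Fintype.ofFinite (f i)
  simp [Nat.card_eq_fintype_card, Fintype.card_sigma]

/-- Flattening a sigma of subtypes over a set into a subtype of a product. -/
def sigmaFlatten {α β : Type*} (S : Set α) (P : α → β → Prop) :
    (Σ a : S, {b // P a.1 b}) ≃ {p : α × β // p.1 ∈ S ∧ P p.1 p.2} where
  toFun s := ⟨(s.1.1, s.2.1), s.1.2, s.2.2⟩
  invFun p := ⟨⟨p.1.1, p.2.1⟩, ⟨p.1.2, p.2.2⟩⟩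
  left_inv s := rfl
  right_inv p := rfl

end N4Aux

open N4Aux in
/-- `N₄(x₀) = c₄(x₀) − (deg(x₀)−2)·c₂(x₀) + (Δ_X c₂)(x₀)`. -/
theorem N_four_formula (X : SerreGraph) [Countable X.V]
    (hconn : X.Connected)
    (hfin : ∀ x : X.V, (X.edgesAt x).Finite)
    (hbd : ∃ M : ℕ, ∀ x : X.V, X.deg x ≤ M)
    (hdeg1 : ∀ x : X.V, X.deg x ≠ 1)
    (x₀ : X.V) :
    (X.N 4 x₀ : ℤ) =
      (X.c 4 x₀ : ℤ) - ((X.deg x₀ : ℤ) - 2) * X.c 2 x₀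
        + X.lap (fun x => (X.c 2 x : ℤ)) x₀ := by
  classical
  letI : Fintype ↥(X.edgesAt x₀) := (hfin x₀).fintype
  set T : ℕ :=
    Nat.card {q : X.E × X.E × X.E × X.E // q ∈ L4S X x₀ ∧ q.2.2.2 = X.bar q.1} with hT
  have hGfin : ∀ e : X.E, Finite (Ge X x₀ e) := fun e =>
    ((L2S_finite X hfin (X.t e)).subset (fun fg h => h.1)).to_subtype
  have hKfin : ∀ e : X.E, Finite (Ke X x₀ e) := fun e =>
    ((hfin x₀).subset (fun g (h : X.o g = x₀ ∧ X.t g = X.t e ∧ g ≠ e) => h.1)).to_subtype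
  -- Step 1 : c₄ = T + N₄
  have step1 : X.c 4 x₀ = T + X.N 4 x₀ := by
    rw [c4_card, N4_card, hT,
      nat_card_split (L4S X x₀) (L4S_finite X hfin x₀) (fun q => q.2.2.2 = X.bar q.1)]
  -- Step 2 : T = ∑ₑ |Ge e|
  have step2 : T = ∑ e : ↥(X.edgesAt x₀), Nat.card (Ge X x₀ e.1) := by
    rw [hT, ← nat_card_sigma]
    apply Nat.card_congr
    refine Equiv.trans ?_ (sigmaFlatten (X.edgesAt x₀)
      (fun e fg => fg ∈ L2S X (X.t e) ∧ fg.1 ≠ X.bar e ∧ fg.2 ≠ e)).symm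
    refine ⟨fun q => ⟨(q.1.1, q.1.2.1, q.1.2.2.1), q.2.1.1, ?_, q.2.1.2.2.2.2.2.1, ?_⟩,
      fun s => ⟨(s.1.1, s.1.2.1, s.1.2.2, X.bar s.1.1), ?_, rfl⟩, ?_, ?_⟩
    · -- the middle pair is a 2-loop at t e
      obtain ⟨⟨h1, h2, h3, h4, h5, h6, h7, h8⟩, h9⟩ := q.2
      refine ⟨h2.symm, h3, ?_, h7⟩
      rw [h4, h9, o_bar']
    · -- third edge ≠ e
      obtain ⟨⟨h1, h2, h3, h4, h5, h6, h7, h8⟩, h9⟩ := q.2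
      intro hge
      exact h8 (h9.trans (congrArg X.bar hge.symm))
    · -- membership in L4S for the reconstruction
      obtain ⟨he, ⟨m1, m2, m3, m4⟩, hf, hg⟩ := s.2
      refine ⟨he, m1.symm, m2, ?_, ?_, hf, m4, ?_⟩
      · rw [m3, o_bar']
      · rw [t_bar, he]
      · intro hh
        exact hg (bar_inj X hh).symm
    · -- left inverse
      rintro ⟨⟨a, b, cc, d⟩, hq, ht⟩
      apply Subtype.ext
      simp only
      rw [← ht]
    · -- right inverse
      rintro ⟨⟨e, f, g⟩, hs⟩
      rfl
  -- Step 3 : pointwise splitting of 2-loops at t e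
  have step3 : ∀ e : X.E, X.o e = x₀ →
      Nat.card (L2S X (X.t e)) =
        Nat.card (Ke X x₀ e) + Nat.card (Ke X x₀ e) + Nat.card (Ge X x₀ e) := by
    intro e he
    rw [nat_card_split (L2S X (X.t e)) (L2S_finite X hfin _) (fun fg => fg.1 = X.bar e)]
    have hA : Nat.card {fg : X.E × X.E // fg ∈ L2S X (X.t e) ∧ fg.1 = X.bar e}
        = Nat.card (Ke X x₀ e) := by
      apply Nat.card_congr
      refine ⟨fun q => ⟨q.1.2, ?_, ?_, ?_⟩, fun g => ⟨(X.bar e, g.1), ⟨?_, ?_, ?_, ?_⟩, rfl⟩,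
        ?_, ?_⟩
      · -- o g = x₀
        obtain ⟨⟨h1, h2, h3, h4⟩, hf⟩ := q.2
        rw [← h2, hf, t_bar, he]
      · exact q.2.1.2.2.1
      · -- g ≠ e
        obtain ⟨⟨h1, h2, h3, h4⟩, hf⟩ := q.2
        intro hge
        exact h4 (by rw [hge, hf, X.bar_bar])
      · exact o_bar' X e
      · rw [t_bar, he, g.2.1]
      · exact g.2.2.1
      · rw [X.bar_bar]
        exact g.2.2.2
      · rintro ⟨⟨f, g⟩, hq, hf⟩
        apply Subtype.ext
        simp only
        rw [← hf]
      · rintro ⟨g, hg⟩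
        rfl
    have hrest : Nat.card {fg : X.E × X.E // fg ∈ L2S X (X.t e) ∧ ¬ fg.1 = X.bar e}
        = Nat.card (Ke X x₀ e) + Nat.card (Ge X x₀ e) := by
      have hS' : ({fg : X.E × X.E | fg ∈ L2S X (X.t e) ∧ ¬ fg.1 = X.bar e}).Finite :=
        (L2S_finite X hfin (X.t e)).subset (fun fg h => h.1)
      rw [show Nat.card {fg : X.E × X.E // fg ∈ L2S X (X.t e) ∧ ¬ fg.1 = X.bar e}
          = Nat.card {fg : X.E × X.E |
              fg ∈ L2S X (X.t e) ∧ ¬ fg.1 = X.bar e} from rfl,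
        nat_card_split _ hS' (fun fg => fg.2 = e)]
      congr 1
      · -- the g = e part ≃ Ke e
        apply Nat.card_congr
        refine ⟨fun q => ⟨X.bar q.1.1, ?_, ?_, ?_⟩,
          fun g => ⟨(X.bar g.1, e), ⟨⟨?_, ?_, ?_, ?_⟩, ?_⟩, rfl⟩, ?_, ?_⟩
        · -- o (bar f) = x₀
          obtain ⟨⟨⟨h1, h2, h3, h4⟩, hf⟩, hg⟩ := q.2
          rw [o_bar', h2, hg, he]
        · -- t (bar f) = t e
          obtain ⟨⟨⟨h1, h2, h3, h4⟩, hf⟩, hg⟩ := q.2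
          rw [t_bar, h1]
        · -- bar f ≠ e
          obtain ⟨⟨⟨h1, h2, h3, h4⟩, hf⟩, hg⟩ := q.2
          intro hh
          exact h4 (hg.trans hh.symm)
        · -- o (bar g) = t e
          rw [o_bar', g.2.2.1]
        · -- t (bar g) = o e
          rw [t_bar, g.2.1, he]
        · -- t e = t e
          rfl
        · -- e ≠ bar (bar g)
          rw [X.bar_bar]
          exact fun hh => g.2.2.2 hh.symm
        · -- bar g ≠ bar e
          intro hh
          exact g.2.2.2 (bar_inj X hh)
        · rintro ⟨⟨f, g⟩, ⟨hq, hf⟩, hg⟩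
          apply Subtype.ext
          simp only
          rw [X.bar_bar, ← hg]
        · rintro ⟨g, hg⟩
          apply Subtype.ext
          simp only
          rw [X.bar_bar]
      · -- the g ≠ e part ≃ Ge e
        apply Nat.card_congr
        exact Equiv.subtypeEquivRight (fun fg => by
          constructor
          · rintro ⟨⟨h1, h2⟩, h3⟩
            exact ⟨h1, h2, h3⟩
          · rintro ⟨h1, h2, h3⟩
            exact ⟨⟨h1, h2⟩, h3⟩)
    rw [hA, hrest, add_assoc]
  -- Step 4 : ∑ₑ |Ke e| = c₂ x₀
  have step4 : ∑ e : ↥(X.edgesAt x₀), Nat.card (Ke X x₀ e.1) = X.c 2 x₀ := by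
    rw [c2_card, ← nat_card_sigma]
    apply Nat.card_congr
    refine Equiv.trans ((sigmaFlatten (X.edgesAt x₀)
      (fun e g => X.o g = x₀ ∧ X.t g = X.t e ∧ g ≠ e))) ?_
    refine ⟨fun s => ⟨(s.1.1, X.bar s.1.2), s.2.1, ?_, ?_, ?_⟩,
      fun q => ⟨(q.1.1, X.bar q.1.2), q.2.1, ?_, ?_, ?_⟩, ?_, ?_⟩
    · -- t e = o (bar g)
      rw [o_bar', s.2.2.2.1]
    · -- t (bar g) = x₀
      rw [t_bar, s.2.2.1]
    · -- bar g ≠ bar e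
      intro hh
      exact s.2.2.2.2 (bar_inj X hh)
    · -- o (bar g) = x₀
      obtain ⟨h1, h2, h3, h4⟩ := q.2
      rw [o_bar', h3]
    · -- t (bar g) = t f
      obtain ⟨h1, h2, h3, h4⟩ := q.2
      rw [t_bar, h2]
    · -- bar g ≠ f
      obtain ⟨h1, h2, h3, h4⟩ := q.2
      intro hh
      exact h4 (by rw [← hh, X.bar_bar])
    · rintro ⟨⟨e, g⟩, hq⟩
      apply Subtype.ext
      simp only
      rw [X.bar_bar]
    · rintro ⟨⟨f, g⟩, hq⟩
      apply Subtype.ext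
      simp only
      rw [X.bar_bar]
  -- Step 5 : the edge sum of c₂ values
  have step5 : ∑ e : ↥(X.edgesAt x₀), X.c 2 (X.t e.1) = 2 * X.c 2 x₀ + T := by
    have hpt : ∀ e : ↥(X.edgesAt x₀), X.c 2 (X.t e.1)
        = Nat.card (Ke X x₀ e.1) + Nat.card (Ke X x₀ e.1) + Nat.card (Ge X x₀ e.1) := by
      intro e
      rw [c2_card]
      exact step3 e.1 e.2
    rw [Finset.sum_congr rfl (fun e _ => hpt e), Finset.sum_add_distrib,
      Finset.sum_add_distrib, step4, ← step2]
    ring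
  -- Step 6 : evaluating the Laplacian term
  have step6 : X.lap (fun x => (X.c 2 x : ℤ)) x₀
      = (X.deg x₀ : ℤ) * (X.c 2 x₀ : ℤ)
        - ∑ e : ↥(X.edgesAt x₀), (X.c 2 (X.t e.1) : ℤ) := by
    unfold SerreGraph.lap
    congr 1
    rw [finsum_mem_eq_finite_toFinset_sum _ (hfin x₀), ← Finset.sum_coe_sort]
    exact Fintype.sum_equiv
      (Equiv.subtypeEquivRight (fun a => (hfin x₀).mem_toFinset))
      _ _ (fun i => rfl)
  -- Put everything together
  have hsum : (∑ e : ↥(X.edgesAt x₀), (X.c 2 (X.t e.1) : ℤ))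
      = 2 * (X.c 2 x₀ : ℤ) + (T : ℤ) := by
    rw [← Nat.cast_sum, step5]
    push_cast
    ring
  rw [step6, hsum]
  have h1 : (X.c 4 x₀ : ℤ) = (T : ℤ) + (X.N 4 x₀ : ℤ) := by
    rw [step1]
    push_cast
    ring
  rw [h1]
  ring
end
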